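/- Let X be a connected compact metric space, η > 0, and let μ, ν be two Borel probability measures on X such that ν(O) ≥ σ·η/8 for every open ball O of radius η/8, and |μ(U) − ν(U)| < δ for every finite union U of balls of radius η/8 or η/4 from a fixed finite η/8-cover, where δ = σ·η/16. Then for every compact subset F ⊆ X one has μ(F) ≤ ν(B_η(F)), where B_η(F) = {x ∈ X : dist(x, F) < η}. -/

import Mathlib

open MeasureTheory Metric

/-- If `ν` gives mass at least `σ·η/8` to every ball of radius `η/8`, and `μ`, `ν`
nearly agree (within `δ = σ·η/16`) on finite unions of balls of radius `η/8` or
`η/4` from a fixed finite `η/8`-cover of the connected compact metric space `X`,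
then `μ(F) ≤ ν(B_η(F))` for every compact `F`. -/
theorem stmt_5 {X : Type*} [MetricSpace X] [CompactSpace X] [ConnectedSpace X]
    [MeasurableSpace X] [BorelSpace X]
    (η σ : ℝ) (hη : 0 < η) (hσ : 0 < σ)
    (μ ν : Measure X) [IsProbabilityMeasure μ] [IsProbabilityMeasure ν]
    (N : ℕ) (c : Fin N → X)
    (hcover : (⋃ i, ball (c i) (η / 8)) = Set.univ)
    (hν : ∀ x : X, ENNReal.ofReal (σ * η / 8) ≤ ν (ball x (η / 8)))
    (happrox8 : ∀ S : Finset (Fin N),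
      |(μ (⋃ i ∈ S, ball (c i) (η / 8))).toReal - (ν (⋃ i ∈ S, ball (c i) (η / 8))).toReal|
        < σ * η / 16)
    (happrox4 : ∀ S : Finset (Fin N),
      |(μ (⋃ i ∈ S, ball (c i) (η / 4))).toReal - (ν (⋃ i ∈ S, ball (c i) (η / 4))).toReal|
        < σ * η / 16) :
    ∀ F : Set X, IsCompact F → μ F ≤ ν (thickening η F) := by
  classical
  intro F _hF
  rcases Set.eq_empty_or_nonempty F with rfl | hFne
  · simp
  by_cases hT : thickening η F = Set.univ
  · rw [hT]
    calc μ F ≤ μ Set.univ := measure_mono (Set.subset_univ F)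
    _ = 1 := measure_univ
    _ = ν Set.univ := measure_univ.symm
  -- a point far from F
  obtain ⟨z, hz⟩ := (Set.ne_univ_iff_exists_notMem _).mp hT
  have hzF : η ≤ Metric.infDist z F := by
    by_contra h
    push_neg at h
    exact hz ((mem_thickening_iff_infDist_lt hFne).mpr h)
  obtain ⟨p, hp⟩ := hFne
  -- intermediate value: a point at distance exactly 3η/8 from F
  have h38 : (3 * η / 8) ∈ Set.range (fun x => Metric.infDist x F) := by
    apply intermediate_value_univ p z (continuous_infDist_pt F)
    constructor
    · show Metric.infDist p F ≤ 3 * η / 8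
      rw [Metric.infDist_zero_of_mem hp]; linarith
    · show 3 * η / 8 ≤ Metric.infDist z F
      linarith
  obtain ⟨y, hy0⟩ := h38
  have hy : Metric.infDist y F = 3 * η / 8 := hy0
  set S : Finset (Fin N) := Finset.univ.filter fun i => (ball (c i) (η / 8) ∩ F).Nonempty
    with hS
  set U : Set X := ⋃ i ∈ S, ball (c i) (η / 8) with hU
  have hFU : F ⊆ U := by
    intro x hx
    have : x ∈ ⋃ i, ball (c i) (η / 8) := hcover ▸ Set.mem_univ x
    obtain ⟨i, hi⟩ := Set.mem_iUnion.mp this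
    refine Set.mem_biUnion ?_ hi
    exact Finset.mem_coe.mpr (Finset.mem_filter.mpr ⟨Finset.mem_univ i, ⟨x, hi, hx⟩⟩)
  have hUdist : ∀ w ∈ U, Metric.infDist w F < η / 4 := by
    intro w hw
    rw [hU, Set.mem_iUnion₂] at hw
    obtain ⟨i, hiS, hwi⟩ := hw
    obtain ⟨q, hq1, hq2⟩ := (Finset.mem_filter.mp hiS).2
    calc Metric.infDist w F ≤ Metric.infDist (c i) F + dist w (c i) :=
          Metric.infDist_le_infDist_add_dist
    _ ≤ dist (c i) q + dist w (c i) := by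
          gcongr; exact Metric.infDist_le_dist_of_mem hq2
    _ < η / 8 + η / 8 := by
          have hq1' : dist (c i) q < η / 8 := by rw [dist_comm]; exact hq1
          exact add_lt_add hq1' hwi
    _ = η / 4 := by ring
  have hUT : U ⊆ thickening η F := by
    intro w hw
    exact (mem_thickening_iff_infDist_lt ⟨p, hp⟩).mpr (lt_trans (hUdist w hw) (by linarith))
  have hBT : ball y (η / 8) ⊆ thickening η F := by
    intro w hw
    apply (mem_thickening_iff_infDist_lt ⟨p, hp⟩).mpr
    calc Metric.infDist w F ≤ Metric.infDist y F + dist w y :=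
          Metric.infDist_le_infDist_add_dist
    _ < 3 * η / 8 + η / 8 := by rw [hy]; exact add_lt_add_right (mem_ball.mp hw) _
    _ < η := by linarith
  have hdisj : Disjoint U (ball y (η / 8)) := by
    rw [Set.disjoint_left]
    intro w hwU hwB
    have h1 : Metric.infDist w F < η / 4 := hUdist w hwU
    have h2 : Metric.infDist y F ≤ Metric.infDist w F + dist y w :=
      Metric.infDist_le_infDist_add_dist
    have h3 : dist y w < η / 8 := by rw [dist_comm]; exact mem_ball.mp hwB
    rw [hy] at h2
    linarith
  have hUmeas : MeasurableSet U := by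
    apply MeasurableSet.biUnion (Set.to_countable _)
    intro i _
    exact measurableSet_ball
  have hνadd : ν U + ν (ball y (η / 8)) ≤ ν (thickening η F) := by
    rw [← measure_union hdisj measurableSet_ball]
    exact measure_mono (Set.union_subset hUT hBT)
  -- pass to real numbers
  have h1 : (μ F).toReal ≤ (μ U).toReal :=
    ENNReal.toReal_mono (measure_ne_top μ U) (measure_mono hFU)
  have h2 := abs_lt.mp (happrox8 S)
  have h3 : σ * η / 8 ≤ (ν (ball y (η / 8))).toReal := by
    have := ENNReal.toReal_mono (measure_ne_top ν _) (hν y)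
    rwa [ENNReal.toReal_ofReal (by positivity)] at this
  have h4 : (ν U).toReal + (ν (ball y (η / 8))).toReal ≤ (ν (thickening η F)).toReal := by
    rw [← ENNReal.toReal_add (measure_ne_top _ _) (measure_ne_top _ _)]
    exact ENNReal.toReal_mono (measure_ne_top _ _) hνadd
  have hση : 0 < σ * η := mul_pos hσ hη
  have hfin : (μ F).toReal ≤ (ν (thickening η F)).toReal := by linarith [h2.2]
  exact (ENNReal.toReal_le_toReal (measure_ne_top _ _) (measure_ne_top _ _)).mp hfin
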